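/- For every a ≥ 0, x, y ∈ ℝ and b ∈ ℤ, the boundary Fourier kernel admits the closed integral form K(a, x, y, b) = (1/2π) ∫_{−π}^{π} e^{−i√a (x sin z − y cos z)} e^{i b z} dz. -/

import Mathlib

open Complex Finset MeasureTheory


open Complex

/-- The alternate Vandermonde convolution `F_{ℓ₁,ℓ₂}(k)`. -/
def altVandermonde (ℓ₁ ℓ₂ : ℕ) (k : ℤ) : ℤ :=
  ∑ l₁ ∈ Finset.range (ℓ₁ + 1), ∑ l₂ ∈ Finset.range (ℓ₂ + 1),
    (-1) ^ (ℓ₂ - l₂) * (ℓ₁.choose l₁ : ℤ) * (ℓ₂.choose l₂ : ℤ) *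
      (if 2 * ((l₁ : ℤ) + l₂) = k + ℓ₁ + ℓ₂ then 1 else 0)

/-- The boundary Fourier kernel
`K(a,x,y,b) = ∑_{ℓ₁,ℓ₂} (a/4)^{(ℓ₁+ℓ₂)/2} F_{ℓ₁,ℓ₂}(b) (iy)^{ℓ₁} x^{ℓ₂}/(ℓ₁! ℓ₂!)`. -/
noncomputable def boundaryKernel (a x y : ℝ) (b : ℤ) : ℂ :=
  ∑' ℓ : ℕ × ℕ,
    (((a / 4) ^ (((ℓ.1 : ℝ) + ℓ.2) / 2) : ℝ) : ℂ) * (altVandermonde ℓ.1 ℓ.2 b : ℂ) *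
      (I * y) ^ ℓ.1 * (x : ℂ) ^ ℓ.2 / ((ℓ.1.factorial : ℂ) * ℓ.2.factorial)

private lemma cexp_tsum (w : ℂ) : Complex.exp w = ∑' n : ℕ, w ^ n / n.factorial := by
  rw [Complex.exp_eq_exp_ℂ, NormedSpace.exp_eq_tsum_div]

private lemma summable_norm_expSeries (w : ℂ) :
    Summable fun n : ℕ => ‖w ^ n / (n.factorial : ℂ)‖ := by
  simpa [norm_div, norm_pow] using Real.summable_pow_div_factorial ‖w‖


private def nExp (b : ℤ) (ℓ₁ ℓ₂ l₁ l₂ : ℕ) : ℤ :=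
  ((l₁ + (ℓ₂ - l₂) : ℕ) : ℤ) - (((ℓ₁ - l₁) + l₂ : ℕ) : ℤ) + b

private noncomputable def cTerm (s x y : ℝ) (ℓ₁ ℓ₂ l₁ l₂ : ℕ) : ℂ :=
  (I * s * y / 2) ^ ℓ₁ * (s * x / 2 : ℂ) ^ ℓ₂ * (ℓ₁.choose l₁ : ℂ) * (ℓ₂.choose l₂ : ℂ) *
    (-1) ^ (ℓ₂ - l₂) / ((ℓ₁.factorial : ℂ) * ℓ₂.factorial)

private lemma altVandermonde_eq (ℓ₁ ℓ₂ : ℕ) (b : ℤ) :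
    altVandermonde ℓ₁ ℓ₂ b =
      ∑ l₁ ∈ Finset.range (ℓ₁ + 1), ∑ l₂ ∈ Finset.range (ℓ₂ + 1),
        (-1) ^ (ℓ₂ - l₂) * (ℓ₁.choose l₁ : ℤ) * (ℓ₂.choose l₂ : ℤ) *
          (if nExp b ℓ₁ ℓ₂ l₁ l₂ = 0 then 1 else 0) := by
  unfold altVandermonde nExp
  rw [← Finset.sum_range_reflect]
  refine Finset.sum_congr rfl fun l₁ hl₁ => ?_
  have h1 : l₁ ≤ ℓ₁ := Finset.mem_range_succ_iff.mp hl₁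
  have e1 : ℓ₁ + 1 - 1 - l₁ = ℓ₁ - l₁ := by omega
  rw [e1]
  refine Finset.sum_congr rfl fun l₂ hl₂ => ?_
  have h2 : l₂ ≤ ℓ₂ := Finset.mem_range_succ_iff.mp hl₂
  rw [Nat.choose_symm h1]
  have hiff : (2 * (((ℓ₁ - l₁ : ℕ) : ℤ) + l₂) = b + ℓ₁ + ℓ₂) ↔
      (((l₁ + (ℓ₂ - l₂) : ℕ) : ℤ) - (((ℓ₁ - l₁) + l₂ : ℕ) : ℤ) + b = 0) := by
    push_cast [Nat.cast_sub h1, Nat.cast_sub h2]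
    omega
  rw [if_congr hiff rfl rfl]

private lemma integral_exp_int (n : ℤ) :
    (∫ z in (-Real.pi)..Real.pi, Complex.exp (I * n * z)) =
      if n = 0 then ((2 * Real.pi : ℝ) : ℂ) else 0 := by
  rcases eq_or_ne n 0 with h | h
  · simp only [h, Int.cast_zero, mul_zero, zero_mul, Complex.exp_zero, if_pos rfl]
    rw [intervalIntegral.integral_const, real_smul]
    push_cast
    ring
  · rw [if_neg h]
    have hc : (I * (n : ℂ)) ≠ 0 := mul_ne_zero I_ne_zero (Int.cast_ne_zero.mpr h)
    rw [integral_exp_mul_complex hc]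
    have : (I * (n : ℂ) * (Real.pi : ℂ)) = I * n * ((-Real.pi : ℝ) : ℂ) + n * (2 * Real.pi * I) := by
      push_cast; ring
    rw [this, Complex.exp_add, Complex.exp_int_mul_two_pi_mul_I, mul_one, sub_self, zero_div]

private lemma term_key (s x y : ℝ) (b : ℤ) (ℓ₁ ℓ₂ : ℕ) (z : ℝ) :
    (I * s * y * (Real.cos z : ℂ)) ^ ℓ₁ / (ℓ₁.factorial : ℂ) *
        ((-(I * s * x * (Real.sin z : ℂ))) ^ ℓ₂ / (ℓ₂.factorial : ℂ)) *
        Complex.exp (I * b * z) =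
      ∑ l₁ ∈ Finset.range (ℓ₁ + 1), ∑ l₂ ∈ Finset.range (ℓ₂ + 1),
        cTerm s x y ℓ₁ ℓ₂ l₁ l₂ * Complex.exp (I * (nExp b ℓ₁ ℓ₂ l₁ l₂) * z) := by
  have hA : (I * (s : ℂ) * y * (Real.cos z : ℂ)) =
      I * s * y / 2 * (Complex.exp (z * I) + Complex.exp (-z * I)) := by
    rw [Complex.ofReal_cos, ← Complex.two_cos]
    ring
  have hB : (-(I * (s : ℂ) * x * (Real.sin z : ℂ))) =
      s * x / 2 * (Complex.exp (-z * I) + -Complex.exp (z * I)) := by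
    rw [Complex.ofReal_sin]
    have h2 := Complex.two_sin (z : ℂ)
    linear_combination (-((s : ℂ) * x / 2) * I) * h2 +
      ((s : ℂ) * x / 2 * (Complex.exp (z * I) - Complex.exp (-z * I))) * Complex.I_sq
  rw [hA, hB, mul_pow, mul_pow, add_pow, add_pow]
  simp only [Finset.sum_mul, Finset.mul_sum, Finset.sum_div]
  rw [Finset.sum_comm]
  refine Finset.sum_congr rfl fun l₁ hl₁ => Finset.sum_congr rfl fun l₂ hl₂ => ?_
  have h1 : l₁ ≤ ℓ₁ := Finset.mem_range_succ_iff.mp hl₁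
  have h2 : l₂ ≤ ℓ₂ := Finset.mem_range_succ_iff.mp hl₂
  have hexp : Complex.exp (z * I) ^ l₁ * Complex.exp (-z * I) ^ (ℓ₁ - l₁) *
      (Complex.exp (-z * I) ^ l₂ * Complex.exp (z * I) ^ (ℓ₂ - l₂)) *
      Complex.exp (I * b * z) = Complex.exp (I * (nExp b ℓ₁ ℓ₂ l₁ l₂) * z) := by
    rw [← Complex.exp_nat_mul, ← Complex.exp_nat_mul, ← Complex.exp_nat_mul,
      ← Complex.exp_nat_mul, ← Complex.exp_add, ← Complex.exp_add, ← Complex.exp_add,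
      ← Complex.exp_add]
    congr 1
    unfold nExp
    push_cast [Nat.cast_sub h1, Nat.cast_sub h2]
    ring
  rw [neg_pow, ← hexp]
  unfold cTerm
  ring

private lemma term_integral (s x y : ℝ) (b : ℤ) (ℓ₁ ℓ₂ : ℕ) :
    (∫ z in (-Real.pi)..Real.pi,
        (I * s * y * (Real.cos z : ℂ)) ^ ℓ₁ / (ℓ₁.factorial : ℂ) *
          ((-(I * s * x * (Real.sin z : ℂ))) ^ ℓ₂ / (ℓ₂.factorial : ℂ)) *
          Complex.exp (I * b * z)) =
      ((2 * Real.pi : ℝ) : ℂ) *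
        ((((s / 2) ^ (ℓ₁ + ℓ₂) : ℝ) : ℂ) * (altVandermonde ℓ₁ ℓ₂ b : ℂ) *
          (I * y) ^ ℓ₁ * (x : ℂ) ^ ℓ₂ / ((ℓ₁.factorial : ℂ) * ℓ₂.factorial)) := by
  have hInt : ∀ (cc : ℂ) (m : ℤ),
      IntervalIntegrable (fun z : ℝ => cc * Complex.exp (I * m * z)) volume (-Real.pi) Real.pi := by
    intro cc m
    apply Continuous.intervalIntegrable
    exact continuous_const.mul (Complex.continuous_exp.comp (by continuity))
  rw [intervalIntegral.integral_congr (fun z _ => term_key s x y b ℓ₁ ℓ₂ z)]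
  rw [intervalIntegral.integral_finset_sum (fun l₁ _ => by
    apply Continuous.intervalIntegrable
    exact continuous_finset_sum _ fun l₂ _ =>
      continuous_const.mul (Complex.continuous_exp.comp (by continuity)))]
  have step : ∀ l₁ ∈ Finset.range (ℓ₁ + 1),
      (∫ z in (-Real.pi)..Real.pi, ∑ l₂ ∈ Finset.range (ℓ₂ + 1),
          cTerm s x y ℓ₁ ℓ₂ l₁ l₂ * Complex.exp (I * (nExp b ℓ₁ ℓ₂ l₁ l₂) * z)) =
        ∑ l₂ ∈ Finset.range (ℓ₂ + 1), cTerm s x y ℓ₁ ℓ₂ l₁ l₂ *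
          (if nExp b ℓ₁ ℓ₂ l₁ l₂ = 0 then ((2 * Real.pi : ℝ) : ℂ) else 0) := by
    intro l₁ _
    rw [intervalIntegral.integral_finset_sum (fun l₂ _ => hInt _ _)]
    refine Finset.sum_congr rfl fun l₂ _ => ?_
    rw [intervalIntegral.integral_const_mul, integral_exp_int]
  rw [Finset.sum_congr rfl step]
  have hcast : ((altVandermonde ℓ₁ ℓ₂ b : ℤ) : ℂ) =
      ∑ l₁ ∈ Finset.range (ℓ₁ + 1), ∑ l₂ ∈ Finset.range (ℓ₂ + 1),
        ((-1 : ℂ) ^ (ℓ₂ - l₂) * (ℓ₁.choose l₁ : ℂ) * (ℓ₂.choose l₂ : ℂ) *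
          (if nExp b ℓ₁ ℓ₂ l₁ l₂ = 0 then 1 else 0)) := by
    rw [altVandermonde_eq]
    push_cast [apply_ite (fun t : ℤ => (t : ℂ))]
    rfl
  rw [hcast]
  simp only [Finset.mul_sum, Finset.sum_mul, Finset.sum_div]
  refine Finset.sum_congr rfl fun l₁ _ => Finset.sum_congr rfl fun l₂ _ => ?_
  by_cases hP : nExp b ℓ₁ ℓ₂ l₁ l₂ = 0
  · rw [if_pos hP, if_pos hP]
    unfold cTerm
    push_cast
    ring
  · rw [if_neg hP, if_neg hP]
    ring

set_option maxHeartbeats 1000000 in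
/-- Closed integral form:
`K(a,x,y,b) = (1/2π) ∫_{−π}^{π} e^{−i√a (x sin z − y cos z)} e^{ibz} dz`. -/
theorem boundaryKernel_integral_form (a : ℝ) (ha : 0 ≤ a) (x y : ℝ) (b : ℤ) :
    boundaryKernel a x y b =
      ((1 / (2 * Real.pi) : ℝ) : ℂ) *
        ∫ z in (-Real.pi)..Real.pi,
          Complex.exp (-(I * Real.sqrt a * (x * Real.sin z - y * Real.cos z))) *
            Complex.exp (I * b * z) := by
  have pi_pos := Real.pi_pos
  have hle : (-Real.pi) ≤ Real.pi := by linarith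
  set s : ℝ := Real.sqrt a with hs
  have hs0 : 0 ≤ s := Real.sqrt_nonneg a
  -- the summand functions
  set G : ℕ × ℕ → ℝ → ℂ := fun ℓ z =>
    (I * s * y * (Real.cos z : ℂ)) ^ ℓ.1 / (ℓ.1.factorial : ℂ) *
      ((-(I * s * x * (Real.sin z : ℂ))) ^ ℓ.2 / (ℓ.2.factorial : ℂ)) *
      Complex.exp (I * b * z) with hG
  -- pointwise expansion of the integrand
  have hpt : ∀ z : ℝ,
      Complex.exp (-(I * s * (x * Real.sin z - y * Real.cos z))) * Complex.exp (I * b * z) =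
        ∑' ℓ : ℕ × ℕ, G ℓ z := by
    intro z
    rw [show -(I * (s : ℂ) * (x * (Real.sin z : ℂ) - y * (Real.cos z : ℂ)))
        = I * s * y * (Real.cos z : ℂ) + -(I * s * x * (Real.sin z : ℂ)) by ring]
    rw [Complex.exp_add, cexp_tsum, cexp_tsum,
      tsum_mul_tsum_of_summable_norm (summable_norm_expSeries _) (summable_norm_expSeries _),
      ← tsum_mul_right]
  -- continuity and integrability of each summand
  have hGc : ∀ ℓ : ℕ × ℕ, Continuous (G ℓ) := by
    intro ℓ
    apply Continuous.mul
    apply Continuous.mul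
    · exact (((continuous_const.mul (Complex.continuous_ofReal.comp Real.continuous_cos)).pow
        _).div_const _)
    · exact (((continuous_const.mul (Complex.continuous_ofReal.comp Real.continuous_sin)).neg.pow
        _).div_const _)
    · exact Complex.continuous_exp.comp (continuous_const.mul Complex.continuous_ofReal)
  have hint : ∀ ℓ : ℕ × ℕ, IntegrableOn (G ℓ) (Set.Ioc (-Real.pi) Real.pi) volume :=
    fun ℓ => (hGc ℓ).integrableOn_Ioc
  -- uniform bound on each summand
  have hnorm : ∀ ℓ : ℕ × ℕ, ∀ z : ℝ,
      ‖G ℓ z‖ ≤ (s * |y|) ^ ℓ.1 / ℓ.1.factorial * ((s * |x|) ^ ℓ.2 / ℓ.2.factorial) := by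
    rintro ⟨ℓ₁, ℓ₂⟩ z
    have hexp1 : ‖Complex.exp (I * b * z)‖ = 1 := by
      rw [show I * (b : ℂ) * (z : ℝ) = (((b : ℝ) * z : ℝ) : ℂ) * I by push_cast; ring,
        Complex.norm_exp_ofReal_mul_I]
    have hA : ‖I * (s : ℂ) * y * (Real.cos z : ℂ)‖ ≤ s * |y| := by
      simp only [norm_mul, Complex.norm_I, Complex.norm_real, Real.norm_eq_abs, one_mul]
      rw [_root_.abs_of_nonneg hs0]
      calc s * |y| * |Real.cos z| ≤ s * |y| * 1 :=
            mul_le_mul_of_nonneg_left (Real.abs_cos_le_one z) (mul_nonneg hs0 (abs_nonneg y))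
        _ = s * |y| := mul_one _
    have hB : ‖-(I * (s : ℂ) * x * (Real.sin z : ℂ))‖ ≤ s * |x| := by
      rw [norm_neg]
      simp only [norm_mul, Complex.norm_I, Complex.norm_real, Real.norm_eq_abs, one_mul]
      rw [_root_.abs_of_nonneg hs0]
      calc s * |x| * |Real.sin z| ≤ s * |x| * 1 :=
            mul_le_mul_of_nonneg_left (Real.abs_sin_le_one z) (mul_nonneg hs0 (abs_nonneg x))
        _ = s * |x| := mul_one _
    have e1 : ‖G (ℓ₁, ℓ₂) z‖ =
        ‖(I * (s:ℂ) * y * (Real.cos z : ℂ)) ^ ℓ₁‖ / (ℓ₁.factorial : ℝ) *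
          (‖(-(I * (s:ℂ) * x * (Real.sin z : ℂ))) ^ ℓ₂‖ / (ℓ₂.factorial : ℝ)) := by
      rw [hG]
      rw [norm_mul, norm_mul, hexp1, mul_one, norm_div, norm_div,
        Complex.norm_natCast, Complex.norm_natCast]
    rw [e1, norm_pow, norm_pow]
    have hf1 : (0:ℝ) < ℓ₁.factorial := by positivity
    have hf2 : (0:ℝ) < ℓ₂.factorial := by positivity
    refine mul_le_mul ((div_le_div_iff_of_pos_right hf1).mpr (pow_le_pow_left₀ (norm_nonneg _) hA ℓ₁))
      ((div_le_div_iff_of_pos_right hf2).mpr (pow_le_pow_left₀ (norm_nonneg _) hB ℓ₂))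
      (by positivity) (by positivity)
  -- summability of the integrals of norms
  have hMsum : Summable fun ℓ : ℕ × ℕ =>
      (2 * Real.pi) * ((s * |y|) ^ ℓ.1 / ℓ.1.factorial * ((s * |x|) ^ ℓ.2 / ℓ.2.factorial)) := by
    refine Summable.mul_left _ ?_
    exact (Real.summable_pow_div_factorial (s * |y|)).mul_of_nonneg
      (Real.summable_pow_div_factorial (s * |x|))
      (fun n => by positivity) (fun n => by positivity)
  have hsum : Summable fun ℓ : ℕ × ℕ => ∫ z in Set.Ioc (-Real.pi) Real.pi, ‖G ℓ z‖ := by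
    refine Summable.of_nonneg_of_le
      (fun ℓ => integral_nonneg fun z => norm_nonneg _) (fun ℓ => ?_) hMsum
    calc (∫ z in Set.Ioc (-Real.pi) Real.pi, ‖G ℓ z‖)
        ≤ ∫ _ in Set.Ioc (-Real.pi) Real.pi,
            ((s * |y|) ^ ℓ.1 / ℓ.1.factorial * ((s * |x|) ^ ℓ.2 / ℓ.2.factorial)) :=
          setIntegral_mono_on ((hint ℓ).norm) (integrableOn_const measure_Ioc_lt_top.ne)
            measurableSet_Ioc (fun z _ => hnorm ℓ z)
      _ = (2 * Real.pi) * ((s * |y|) ^ ℓ.1 / ℓ.1.factorial * ((s * |x|) ^ ℓ.2 / ℓ.2.factorial)) := by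
          rw [setIntegral_const, Real.volume_real_Ioc_of_le hle, smul_eq_mul]
          ring
  -- each term integral
  have heach : ∀ ℓ : ℕ × ℕ,
      (∫ z in Set.Ioc (-Real.pi) Real.pi, G ℓ z) =
        ((2 * Real.pi : ℝ) : ℂ) *
          ((((s / 2) ^ (ℓ.1 + ℓ.2) : ℝ) : ℂ) * (altVandermonde ℓ.1 ℓ.2 b : ℂ) *
            (I * y) ^ ℓ.1 * (x : ℂ) ^ ℓ.2 / ((ℓ.1.factorial : ℂ) * ℓ.2.factorial)) := by
    intro ℓ
    rw [← intervalIntegral.integral_of_le hle]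
    exact term_integral s x y b ℓ.1 ℓ.2
  -- coefficient identity
  have hcoef : ∀ ℓ₁ ℓ₂ : ℕ, ((a / 4 : ℝ) ^ ((((ℓ₁ : ℕ) : ℝ) + ℓ₂) / 2)) = (s / 2) ^ (ℓ₁ + ℓ₂) := by
    intro ℓ₁ ℓ₂
    have h4 : (0 : ℝ) ≤ a / 4 := by positivity
    have he : (((ℓ₁ : ℕ) : ℝ) + ℓ₂) / 2 = (1 / 2 : ℝ) * ((ℓ₁ + ℓ₂ : ℕ) : ℝ) := by
      push_cast; ring
    have hhalf : (a / 4 : ℝ) ^ (1 / 2 : ℝ) = s / 2 := by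
      rw [← Real.sqrt_eq_rpow, hs, show (a / 4 : ℝ) = a / 2 ^ 2 by norm_num,
        Real.sqrt_div ha, Real.sqrt_sq (by norm_num : (0:ℝ) ≤ 2)]
    rw [he, Real.rpow_mul h4, hhalf, Real.rpow_natCast]
  calc boundaryKernel a x y b
      = ∑' ℓ : ℕ × ℕ,
          ((((s / 2) ^ (ℓ.1 + ℓ.2) : ℝ) : ℂ) * (altVandermonde ℓ.1 ℓ.2 b : ℂ) *
            (I * y) ^ ℓ.1 * (x : ℂ) ^ ℓ.2 / ((ℓ.1.factorial : ℂ) * ℓ.2.factorial)) := by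
        unfold boundaryKernel
        exact tsum_congr fun ℓ => by rw [hcoef ℓ.1 ℓ.2]
    _ = ((1 / (2 * Real.pi) : ℝ) : ℂ) * ∑' ℓ : ℕ × ℕ,
          ((2 * Real.pi : ℝ) : ℂ) *
            ((((s / 2) ^ (ℓ.1 + ℓ.2) : ℝ) : ℂ) * (altVandermonde ℓ.1 ℓ.2 b : ℂ) *
              (I * y) ^ ℓ.1 * (x : ℂ) ^ ℓ.2 / ((ℓ.1.factorial : ℂ) * ℓ.2.factorial)) := by
        rw [tsum_mul_left, ← mul_assoc]
        norm_cast
        rw [show (1 / (2 * Real.pi)) * (2 * Real.pi) = 1 by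
          field_simp]
        simp
    _ = ((1 / (2 * Real.pi) : ℝ) : ℂ) * ∑' ℓ : ℕ × ℕ,
          ∫ z in Set.Ioc (-Real.pi) Real.pi, G ℓ z := by
        rw [tsum_congr heach]
    _ = ((1 / (2 * Real.pi) : ℝ) : ℂ) *
          ∫ z in Set.Ioc (-Real.pi) Real.pi, ∑' ℓ : ℕ × ℕ, G ℓ z := by
        rw [integral_tsum_of_summable_integral_norm hint hsum]
    _ = ((1 / (2 * Real.pi) : ℝ) : ℂ) *
          ∫ z in Set.Ioc (-Real.pi) Real.pi,
            Complex.exp (-(I * s * (x * Real.sin z - y * Real.cos z))) *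
              Complex.exp (I * b * z) := by
        congr 1
        refine integral_congr_ae (Filter.Eventually.of_forall fun z => ?_)
        exact (hpt z).symm
    _ = ((1 / (2 * Real.pi) : ℝ) : ℂ) *
          ∫ z in (-Real.pi)..Real.pi,
            Complex.exp (-(I * Real.sqrt a * (x * Real.sin z - y * Real.cos z))) *
              Complex.exp (I * b * z) := by
        rw [intervalIntegral.integral_of_le hle]
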